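/- arXiv:2012.01033 — 3 statements merged into one kernel-verified Lean document; each statement's English description precedes it below -/
import Mathlib

section
/- Given an m×m matrix d over F with d² = 0 and an entry d^i_j ≠ 0, after (1) adding to each row k with d^k_j ≠ 0 (k ≠ i) the i-th row multiplied by −(d^i_j)^{-1} d^k_j, and then (2) deleting rows i and j and columns i and j, the resulting (m−2)×(m−2) matrix d' also satisfies (d')² = 0. -/
lemma sum_ne_ne {F : Type*} [AddCommGroup F] {m : ℕ} {i j : Fin m} (hij : i ≠ j)
    (g : Fin m → F) :
    ∑ c : {k : Fin m // k ≠ i ∧ k ≠ j}, g c.1 = (∑ c, g c) - g i - g j := by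
  classical
  have h1 : ∑ c : {k : Fin m // k ≠ i ∧ k ≠ j}, g c.1
      = ∑ c ∈ Finset.univ.filter (fun k => k ≠ i ∧ k ≠ j), g c :=
    (Finset.sum_subtype _ (by simp) g).symm
  have h2 : Finset.univ.filter (fun k : Fin m => k ≠ i ∧ k ≠ j)
      = Finset.univ \ {i, j} := by
    ext k; simp [not_or]
  have h3 : ({i, j} : Finset (Fin m)) ⊆ Finset.univ := Finset.subset_univ _
  rw [h1, h2, Finset.sum_sdiff_eq_sub h3, Finset.sum_pair hij, sub_add_eq_sub_sub]

/-- Given `d` with `d² = 0` and `d i j ≠ 0`: after adding to each row `k ≠ i`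
the `i`-th row multiplied by `-(d i j)⁻¹ * d k j`, and then deleting rows and
columns `i` and `j`, the resulting matrix `d'` also satisfies `d'² = 0`. -/
theorem split_reduction_square_zero (F : Type*) [Field F] (m : ℕ)
    (d : Matrix (Fin m) (Fin m) F) (hd : d * d = 0)
    (i j : Fin m) (hij : i ≠ j) (hdij : d i j ≠ 0)
    (e : Matrix (Fin m) (Fin m) F)
    (he : e = Matrix.of fun k l =>
      if k = i then d i l else d k l - (d i j)⁻¹ * d k j * d i l)
    (d' : Matrix {k : Fin m // k ≠ i ∧ k ≠ j} {k : Fin m // k ≠ i ∧ k ≠ j} F)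
    (hd' : d' = Matrix.of fun a b => e a.1 b.1) :
    d' * d' = 0 := by
  classical
  have hdd : ∀ k l, ∑ c, d k c * d c l = 0 := by
    intro k l
    have := congrFun (congrFun hd k) l
    simpa [Matrix.mul_apply] using this
  -- e * d = 0
  have hed : ∀ k l, ∑ c, e k c * d c l = 0 := by
    intro k l
    by_cases hk : k = i
    · subst hk
      simp only [he, Matrix.of_apply, if_pos rfl]
      exact hdd _ _
    · simp only [he, Matrix.of_apply, if_neg hk]
      have : ∑ c, (d k c - (d i j)⁻¹ * d k j * d i c) * d c l
          = (∑ c, d k c * d c l) - (d i j)⁻¹ * d k j * ∑ c, d i c * d c l := by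
        rw [Finset.mul_sum, ← Finset.sum_sub_distrib]
        congr 1; ext c; ring
      rw [this, hdd, hdd]; ring
  -- e a j = 0 for a ≠ i
  have heaj : ∀ a : Fin m, a ≠ i → e a j = 0 := by
    intro a ha
    simp only [he, Matrix.of_apply, if_neg ha]
    field_simp
    ring
  have heib : ∀ b, e i b = d i b := by
    intro b; simp [he]
  ext a b
  simp only [hd', Matrix.mul_apply, Matrix.of_apply, Matrix.zero_apply]
  rw [sum_ne_ne hij (fun c => e a.1 c * e c b.1)]
  -- rewrite e c b for c in the sum: split on c = i
  have key : ∀ l : Fin m, ∑ c, e a.1 c * e c l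
      = e a.1 i * d i l := by
    intro l
    have hsplit : ∀ c : Fin m, e a.1 c * e c l
        = e a.1 c * (d c l - (d i j)⁻¹ * d c j * d i l)
          + (if c = i then e a.1 i * ((d i j)⁻¹ * d i j * d i l) else 0) := by
      intro c
      by_cases hc : c = i
      · subst hc
        rw [if_pos rfl, heib]
        field_simp
        ring
      · simp only [he, Matrix.of_apply, if_neg hc]
        ring
    calc ∑ c, e a.1 c * e c l
        = ∑ c, (e a.1 c * (d c l - (d i j)⁻¹ * d c j * d i l)
          + (if c = i then e a.1 i * ((d i j)⁻¹ * d i j * d i l) else 0)) := by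
          exact Finset.sum_congr rfl fun c _ => hsplit c
      _ = (∑ c, e a.1 c * d c l) - (d i j)⁻¹ * d i l * (∑ c, e a.1 c * d c j)
          + e a.1 i * ((d i j)⁻¹ * d i j * d i l) := by
          rw [Finset.sum_add_distrib, Finset.sum_ite_eq' Finset.univ i, if_pos (Finset.mem_univ i)]
          congr 1
          rw [Finset.mul_sum, ← Finset.sum_sub_distrib]
          congr 1; ext c; ring
      _ = e a.1 i * d i l := by
          rw [hed, hed, inv_mul_cancel₀ hdij]; ring
  rw [key b.1, heib, heaj a.1 a.2.1]
  ring
end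

section
/- Let X be a finite set of generators each labelled with an entrance time ent(x) ∈ [0,∞), and let d be a square matrix indexed by X. If d has at least one non-zero entry, then there exists a pair of indices (i, j) with d^i_j ≠ 0 such that ent(x_i) = max{ent(x_h) : d^h_j ≠ 0} and ent(x_j) = min{ent(x_h) : d^i_h ≠ 0}. -/
open Classical


/-- If the square matrix `d`, whose rows/columns are labelled by entrance times
`ent`, has a non-zero entry, then there is a pair `(i, j)` satisfying the split
conditions: `d i j ≠ 0`, `i` maximizes `ent` among the non-zero rows of column
`j`, and `j` minimizes `ent` among the non-zero columns of row `i`. -/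

theorem exists_split_pair (F : Type*) [Field F] (m : ℕ)
    (d : Matrix (Fin m) (Fin m) F)
    (ent : Fin m → ℝ) (hent : ∀ k, 0 ≤ ent k)
    (hd : d ≠ 0) :
    ∃ i j : Fin m, d i j ≠ 0 ∧
      (∀ h, d h j ≠ 0 → ent h ≤ ent i) ∧
      (∀ h, d i h ≠ 0 → ent j ≤ ent h) := by
  -- set of columns containing a nonzero entry
  set S : Finset (Fin m) := Finset.univ.filter (fun j => ∃ i, d i j ≠ 0) with hS
  have hSne : S.Nonempty := by
    by_contra hne
    apply hd
    ext i j
    simp only [Matrix.zero_apply]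
    by_contra h0
    exact hne ⟨j, by simp [hS, Finset.mem_filter]; exact ⟨i, h0⟩⟩
  obtain ⟨j, hjS, hjmin⟩ := S.exists_min_image ent hSne
  have hjS' : ∃ i, d i j ≠ 0 := by simpa [hS] using hjS
  -- set of nonzero rows of column j
  set T : Finset (Fin m) := Finset.univ.filter (fun i => d i j ≠ 0) with hT
  have hTne : T.Nonempty := by
    obtain ⟨i, hi⟩ := hjS'
    exact ⟨i, by simp [hT, hi]⟩
  obtain ⟨i, hiT, himax⟩ := T.exists_max_image ent hTne
  have hij : d i j ≠ 0 := by simpa [hT] using hiT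
  refine ⟨i, j, hij, ?_, ?_⟩
  · intro h hh
    exact himax h (by simp [hT, hh])
  · intro h hh
    exact hjmin h (by simp [hS]; exact ⟨i, hh⟩)
end

section
/- Let δ : V → V satisfy δ² = 0 with matrix d in a basis x_1,…,x_m, and suppose (i,j) satisfies the split conditions with respect to an entrance-time labelling ent. Then after the two changes of basis described (replacing x_i by δ(x_j), then subtracting multiples of x_j from the other generators), the resulting basis elements retain the same entrance times: ent(x̃_k) = ent(x_k) for all k, where the entrance time of a linear combination Σ α_r x_r (α_r ≠ 0 for some r) is max{ent(x_r) : α_r ≠ 0}. -/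
/-- Entrance times are preserved by the two changes of basis of the splitting
procedure.  `d` is the total boundary matrix (`d² = 0`, and `d r c ≠ 0` forces
`ent r ≤ ent c`), and `(i, j)` satisfies the split conditions.  The first
change of basis replaces `xᵢ` by `δ(xⱼ)` (matrix `P`), the second subtracts
multiples of the new `xⱼ` from the other generators (matrix `Q`), so the new
basis vectors are the columns of `P * Q` in the original basis.  The entrance
time of a nonzero linear combination being the maximum of `ent` over the basis
vectors with non-zero coefficient, the claim `ent (x̃ₖ) = ent (xₖ)` says: the
`k`-th diagonal entry of `P * Q` is non-zero, and every non-zero entry of its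
`k`-th column lies in a row `r` with `ent r ≤ ent k`. -/
theorem entrance_times_preserved (F : Type*) [Field F] (m : ℕ)
    (d : Matrix (Fin m) (Fin m) F) (hd : d * d = 0)
    (ent : Fin m → ℝ) (hent0 : ∀ k, 0 ≤ ent k)
    (hfilt : ∀ r c, d r c ≠ 0 → ent r ≤ ent c)
    (i j : Fin m) (hij : i ≠ j) (hdij : d i j ≠ 0)
    (hSC2 : ∀ h, d h j ≠ 0 → ent h ≤ ent i)
    (hSC3 : ∀ h, d i h ≠ 0 → ent j ≤ ent h)
    (P Q : Matrix (Fin m) (Fin m) F)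
    (hP : P = (1 : Matrix (Fin m) (Fin m) F).updateCol i (fun r => d r j))
    (hQ : Q = Matrix.of fun r k =>
      if r = k then 1 else if r = j then -((P⁻¹ * d * P) i k) else 0) :
    ∀ k, (P * Q) k k ≠ 0 ∧ ∀ r, (P * Q) r k ≠ 0 → ent r ≤ ent k := by
  -- entries of P
  have hPapp : ∀ r c, P r c = if c = i then d r j else if r = c then 1 else 0 := by
    intro r c
    rw [hP, Matrix.updateCol_apply]
    by_cases hc : c = i <;> simp [hc, Matrix.one_apply]
  -- det P = d i j
  have hdet : P.det = d i j := by
    rw [hP, ← Matrix.cramer_apply, Matrix.cramer_one]; rfl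
  have hu : IsUnit P.det := by rw [hdet]; exact hdij.isUnit
  have hPP : P * P⁻¹ = 1 := Matrix.mul_nonsing_inv P hu
  -- row i of (P * X)
  have hrow : ∀ (X : Matrix (Fin m) (Fin m) F) k, (P * X) i k = d i j * X i k := by
    intro X k
    rw [Matrix.mul_apply]
    rw [Finset.sum_eq_single i]
    · simp [hPapp]
    · intro b _ hb
      simp [hPapp, hb, Ne.symm hb]
    · simp
  -- the key computation of (P⁻¹ * d * P) i k
  have hM : ∀ k, (P⁻¹ * d * P) i k = (if k = i then 0 else d i k) / d i j := by
    intro k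
    have h2 : P * (P⁻¹ * d * P) = d * P := by
      rw [← Matrix.mul_assoc, ← Matrix.mul_assoc, hPP, Matrix.one_mul]
    have h1 : d i j * (P⁻¹ * d * P) i k = (d * P) i k := by
      rw [← hrow (P⁻¹ * d * P) k, h2]
    have h3 : (d * P) i k = if k = i then 0 else d i k := by
      rw [Matrix.mul_apply]
      by_cases hk : k = i
      · rw [if_pos hk]
        have hc : ∀ c, P c k = d c j := by intro c; simp [hPapp, hk]
        simp only [hc]
        have h0 : (d * d) i j = 0 := by rw [hd]; rfl
        rw [Matrix.mul_apply] at h0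
        simpa using h0
      · rw [Finset.sum_eq_single k]
        · simp [hPapp, hk]
        · intro b _ hb
          simp [hPapp, hk, hb]
        · simp
    rw [← h3, ← h1]
    field_simp
  -- formula for entries of P * Q
  have hPQ : ∀ r k, (P * Q) r k =
      P r k + (if r = j ∧ j ≠ k then -((P⁻¹ * d * P) i k) else 0) := by
    intro r k
    rw [Matrix.mul_apply]
    have hsplit : ∀ c, P r c * Q c k =
        (if c = k then P r c else 0) +
        (if c = j then (if c = k then 0 else P r c * -((P⁻¹ * d * P) i k)) else 0) := by
      intro c
      rw [hQ]
      by_cases h2 : c = j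
      · subst h2
        by_cases h1 : c = k <;> simp [h1, mul_comm]
      · by_cases h1 : c = k <;> simp [h1, h2, mul_comm]
    simp only [hsplit, Finset.sum_add_distrib]
    congr 1
    · simp
    · rw [Finset.sum_eq_single j]
      · by_cases hjk : j = k
        · simp [hjk]
        · have hPrj : P r j = if r = j then 1 else 0 := by
            simp [hPapp, Ne.symm hij]
          rw [hPrj]
          by_cases hrj : r = j <;> simp [hjk, hrj]
      · intro b _ hb; simp [hb]
      · simp
  intro k
  constructor
  · -- diagonal entry nonzero
    rw [hPQ]
    have : ¬ (k = j ∧ j ≠ k) := by rintro ⟨h1, h2⟩; exact h2 h1.symm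
    rw [if_neg this, add_zero, hPapp]
    by_cases hk : k = i <;> simp [hk, hdij]
  · intro r hr
    rw [hPQ] at hr
    by_cases hjk : j = k
    · -- k = j : column is e_j
      rw [if_neg (by rintro ⟨_, h⟩; exact h hjk), add_zero, hPapp] at hr
      rw [if_neg (fun h : k = i => hij (hjk.trans h).symm)] at hr
      by_cases hrk : r = k
      · exact le_of_eq (by rw [hrk])
      · simp [hrk] at hr
    · by_cases hrj : r = j
      · -- row j, k ≠ j
        rw [if_pos ⟨hrj, hjk⟩, hM, hPapp] at hr
        by_cases hk : k = i
        · -- entry is d r j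
          rw [if_pos hk, if_pos hk, zero_div, neg_zero, add_zero] at hr
          rw [hk]
          exact hSC2 r hr
        · -- entry is - d i k / d i j
          rw [if_neg hk, if_neg hk, if_neg (fun h : r = k => hjk (hrj.symm.trans h))] at hr
          have hik : d i k ≠ 0 := by
            intro h0
            simp [h0] at hr
          rw [hrj]
          exact hSC3 k hik
      · -- r ≠ j, k ≠ j : entry is P r k
        rw [if_neg (fun h => hrj h.1), add_zero, hPapp] at hr
        by_cases hk : k = i
        · rw [if_pos hk] at hr
          rw [hk]
          exact hSC2 r hr
        · rw [if_neg hk] at hr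
          by_cases hrk : r = k
          · exact le_of_eq (by rw [hrk])
          · simp [hrk] at hr
end
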